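/- Let (M, Ω) be a measurable space, H a separable Hilbert space, (V_j : M → H)_{j∈ℕ} measurable functions, and for each x ∈ M set H_x to be the closed linear span of {V_j(x) : j ∈ ℕ}. Then for every measurable Y : M → H, the map x ↦ proj_{H_x} Y(x) is measurable. -/

import Mathlib

open scoped InnerProductSpace

open Filter Submodule Set InnerProductSpace

section Aux

variable {𝕜 : Type*} [RCLike 𝕜] {H : Type*} [NormedAddCommGroup H]
    [InnerProductSpace 𝕜 H]

local notation "⟪" x ", " y "⟫" => @inner 𝕜 _ _ x y

/-- Orthogonal projection onto (the closure of) a finite span, computed via Gram–Schmidt. -/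
theorem aux_proj_eq_sum [CompleteSpace H] (f : ℕ → H) (y : H) (n : ℕ) :
    (orthogonalProjection ((span 𝕜 (f '' Set.Iic n)).topologicalClosure) y : H) =
      ∑ i ∈ Finset.Iic n,
        (⟪gramSchmidt 𝕜 f i, y⟫ / ((‖gramSchmidt 𝕜 f i‖ ^ 2 : ℝ) : 𝕜)) • gramSchmidt 𝕜 f i := by
  set u : ℕ → H := gramSchmidt 𝕜 f with hu
  set P : H := ∑ i ∈ Finset.Iic n, (⟪u i, y⟫ / ((‖u i‖ ^ 2 : ℝ) : 𝕜)) • u i with hP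
  apply eq_starProjection_of_mem_of_inner_eq_zero
  · apply Submodule.sum_mem
    intro i hi
    refine Submodule.smul_mem _ _ (Submodule.le_topologicalClosure _ ?_)
    exact gramSchmidt_mem_span 𝕜 f (Finset.mem_Iic.1 hi)
  · intro w hw
    have hclosed : IsClosed {v : H | ⟪y - P, v⟫ = 0} := by
      have : Continuous fun v : H => ⟪y - P, v⟫ := continuous_const.inner continuous_id
      exact isClosed_eq this continuous_const
    have hspan : (span 𝕜 (f '' Set.Iic n) : Set H) ⊆ {v : H | ⟪y - P, v⟫ = 0} := by
      rw [← span_gramSchmidt_Iic 𝕜 f n]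
      intro v hv
      rw [SetLike.mem_coe] at hv
      induction hv using Submodule.span_induction with
      | mem v hv =>
        obtain ⟨j, hj, rfl⟩ := hv
        rw [Set.mem_Iic] at hj
        show ⟪y - P, u j⟫ = 0
        rw [inner_sub_left, sub_eq_zero, hP, sum_inner]
        rw [Finset.sum_eq_single_of_mem j (Finset.mem_Iic.2 hj)]
        · rw [inner_smul_left]
          by_cases h : u j = 0
          · simp [h]
          · rw [map_div₀, inner_conj_symm, RCLike.conj_ofReal, RCLike.ofReal_pow,
              ← inner_self_eq_norm_sq_to_K, div_mul_cancel₀]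
            rwa [Ne, inner_self_eq_zero]
        · intro i hi hij
          rw [inner_smul_left]
          have : ⟪u i, u j⟫ = 0 := gramSchmidt_orthogonal 𝕜 f hij
          simp [this]
      | zero => show ⟪y - P, (0 : H)⟫ = 0; simp
      | add x y' hx hy h1 h2 =>
          show ⟪y - P, x + y'⟫ = 0
          rw [inner_add_right, h1, h2, add_zero]
      | smul c x hx h1 =>
          show ⟪y - P, c • x⟫ = 0
          rw [inner_smul_right, h1, mul_zero]
    have hsub : (closure (span 𝕜 (f '' Set.Iic n) : Set H)) ⊆ {v : H | ⟪y - P, v⟫ = 0} :=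
      closure_minimal hspan hclosed
    have hw' : w ∈ closure (span 𝕜 (f '' Set.Iic n) : Set H) := by
      rw [← Submodule.topologicalClosure_coe]
      exact hw
    exact hsub hw'

end Aux

/-- If `(V j)` are measurable maps into a separable Hilbert space and `H_x` is the closed
linear span of `{V j x : j ∈ ℕ}`, then for measurable `Y` the map
`x ↦ proj_{H_x} (Y x)` is measurable. -/
theorem stmt_2 {𝕜 : Type*} [RCLike 𝕜] {H : Type*} [NormedAddCommGroup H]
    [InnerProductSpace 𝕜 H] [CompleteSpace H] [SecondCountableTopology H]
    [MeasurableSpace H] [BorelSpace H]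
    {M : Type*} [MeasurableSpace M] (V : ℕ → M → H) (hV : ∀ j, Measurable (V j))
    (Y : M → H) (hY : Measurable Y) :
    Measurable fun x : M =>
      (orthogonalProjection
        ((Submodule.span 𝕜 (Set.range fun j : ℕ => V j x)).topologicalClosure) (Y x) : H) := by
  letI : MeasurableSpace 𝕜 := borel 𝕜
  haveI : BorelSpace 𝕜 := ⟨rfl⟩
  -- the Gram–Schmidt orthogonalization of the V's, pointwise in x
  set u : ℕ → M → H := fun n x => gramSchmidt 𝕜 (fun j => V j x) n with hu
  -- measurability of the Gram–Schmidt vectors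
  have humeas : ∀ n, Measurable (u n) := by
    intro n
    induction n using Nat.strong_induction_on with
    | _ n ih =>
      have heq : u n = fun x => V n x - ∑ i ∈ Finset.Iio n,
          ((@inner 𝕜 _ _ (u i x) (V n x)) / ((‖u i x‖ ^ 2 : ℝ) : 𝕜)) • u i x := by
        funext x
        rw [hu]
        simp only
        rw [gramSchmidt_def 𝕜 (fun j => V j x) n]
        congr 1
        refine Finset.sum_congr rfl fun i _ => ?_
        rw [starProjection_singleton]
      rw [heq]
      apply (hV n).sub
      apply Finset.measurable_sum
      intro i hi
      have hiu : Measurable (u i) := ih i (Finset.mem_Iio.1 hi)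
      have h1 : Measurable fun x => (@inner 𝕜 _ _ (u i x) (V n x)) := hiu.inner (hV n)
      have h2 : Measurable fun x => ((‖u i x‖ ^ 2 : ℝ) : 𝕜) :=
        (RCLike.continuous_ofReal.measurable).comp ((hiu.norm.pow_const 2))
      exact (h1.div h2).smul hiu
  -- the finite-stage projections
  set F : ℕ → M → H := fun n x =>
    (orthogonalProjection ((Submodule.span 𝕜 ((fun j => V j x) '' Set.Iic n)).topologicalClosure)
      (Y x) : H) with hF
  have hFmeas : ∀ n, Measurable (F n) := by
    intro n
    have : F n = fun x => ∑ i ∈ Finset.Iic n,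
        ((@inner 𝕜 _ _ (u i x) (Y x)) / ((‖u i x‖ ^ 2 : ℝ) : 𝕜)) • u i x := by
      funext x
      rw [hF]
      exact aux_proj_eq_sum (fun j => V j x) (Y x) n
    rw [this]
    apply Finset.measurable_sum
    intro i _
    have h1 : Measurable fun x => (@inner 𝕜 _ _ (u i x) (Y x)) := (humeas i).inner hY
    have h2 : Measurable fun x => ((‖u i x‖ ^ 2 : ℝ) : 𝕜) :=
      (RCLike.continuous_ofReal.measurable).comp (((humeas i).norm.pow_const 2))
    exact (h1.div h2).smul (humeas i)
  -- pointwise convergence of the finite-stage projections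
  apply measurable_of_tendsto_metrizable' atTop hFmeas
  rw [tendsto_pi_nhds]
  intro x
  set U : ℕ → Submodule 𝕜 H := fun n =>
    (Submodule.span 𝕜 ((fun j => V j x) '' Set.Iic n)).topologicalClosure with hU
  have hUmono : Monotone U := fun m n hmn =>
    Submodule.topologicalClosure_mono
      (Submodule.span_mono (Set.image_mono (Set.Iic_subset_Iic.2 hmn)))
  have key : (⨆ n, U n).topologicalClosure =
      (Submodule.span 𝕜 (Set.range fun j : ℕ => V j x)).topologicalClosure := by
    apply le_antisymm
    · apply Submodule.topologicalClosure_minimal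
      · apply iSup_le
        intro n
        apply Submodule.topologicalClosure_minimal
        · exact Submodule.span_mono (Set.image_subset_range _ _) |>.trans
            (Submodule.le_topologicalClosure _)
        · exact Submodule.isClosed_topologicalClosure _
      · exact Submodule.isClosed_topologicalClosure _
    · apply Submodule.topologicalClosure_mono
      apply Submodule.span_le.2
      rintro _ ⟨j, rfl⟩
      exact SetLike.le_def.1 (le_iSup U j)
        (Submodule.le_topologicalClosure _ (Submodule.subset_span ⟨j, Set.mem_Iic.2 le_rfl, rfl⟩))
  have h1 := starProjection_tendsto_closure_iSup U hUmono (Y x)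
  simp only [key] at h1
  exact h1
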